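/- Let u : [0,∞) → ℝ^N be differentiable and satisfy the LCA dynamics τ·u̇(t) = −u(t) − (ΦᵀΦ − I)·T_λ(u(t)) + Φᵀy for all t ≥ 0, where τ > 0. If the outputs converge, i.e. T_λ(u(t)) → a* as t → ∞ for some a* ∈ ℝ^N, then the states also converge: u(t) → u* := a* + Φᵀ(y − Φa*) as t → ∞. -/

import Mathlib

open Matrix

/-- The generic thresholding activation function `T_λ` built from `f`. -/
noncomputable def Tl (lam : ℝ) (f : ℝ → ℝ) (u : ℝ) : ℝ :=
  if |u| ≤ lam then 0 else f u

open Filter Set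


open Filter Set

lemma scalar_ode {τ : ℝ} (hτ : 0 < τ) (w w' h : ℝ → ℝ) (L : ℝ)
    (hd : ∀ t : ℝ, 0 ≤ t → HasDerivWithinAt w (w' t) (Set.Ici 0) t)
    (heq : ∀ t : ℝ, 0 ≤ t → τ * w' t = -(w t) + h t)
    (hh : Tendsto h atTop (nhds L)) :
    Tendsto w atTop (nhds L) := by
  have hτ' : τ ≠ 0 := ne_of_gt hτ
  rw [Metric.tendsto_atTop]
  intro ε hε
  obtain ⟨T₀, hT₀⟩ := Metric.tendsto_atTop.1 hh (ε / 4) (by positivity)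
  set T : ℝ := max T₀ 0 with hTdef
  have hT0 : (0 : ℝ) ≤ T := le_max_right _ _
  have hhb : ∀ s : ℝ, T ≤ s → |h s - L| ≤ ε / 4 := by
    intro s hs
    have := hT₀ s (le_trans (le_max_left _ _) hs)
    rw [Real.dist_eq] at this
    linarith
  set φ : ℝ → ℝ := fun s => Real.exp (s / τ) * (w s - L) with hφ
  set φd : ℝ → ℝ := fun s => Real.exp (s / τ) * (1 / τ) * (w s - L) + Real.exp (s / τ) * w' s
    with hφd
  set B : ℝ → ℝ := fun s => (|φ T| - ε / 4 * Real.exp (T / τ)) + ε / 4 * Real.exp (s / τ)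
    with hB
  -- main estimate
  have main : ∀ t : ℝ, T ≤ t → |φ t| ≤ B t := by
    intro t ht
    have hcont : ContinuousOn φ (Set.Icc T t) := by
      apply ContinuousOn.mul
      · exact (Real.continuous_exp.comp (continuous_id.div_const τ)).continuousOn
      · refine ContinuousOn.sub ?_ continuousOn_const
        intro s hs
        exact ((hd s (le_trans hT0 hs.1)).continuousWithinAt).mono
          (fun x hx => le_trans hT0 hx.1)
    have hder : ∀ s ∈ Set.Ico T t, HasDerivWithinAt φ (φd s) (Set.Ici s) s := by
      intro s hs
      have hs0 : (0 : ℝ) ≤ s := le_trans hT0 hs.1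
      have he : HasDerivAt (fun s : ℝ => Real.exp (s / τ)) (Real.exp (s / τ) * (1 / τ)) s :=
        ((hasDerivAt_id' s).div_const τ).exp
      have hw : HasDerivWithinAt (fun s => w s - L) (w' s) (Set.Ici s) s :=
        ((hd s hs0).mono (Set.Ici_subset_Ici.2 hs0)).sub_const L
      exact he.hasDerivWithinAt.mul hw
    have hBd : ∀ x : ℝ, HasDerivAt B (ε / 4 * (Real.exp (x / τ) * (1 / τ))) x := by
      intro x
      exact (((Real.hasDerivAt_exp (x / τ)).comp x
        ((hasDerivAt_id x).div_const τ)).const_mul (ε / 4)).const_add _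
    have hBa : |φ T| ≤ B T := by simp [hB]
    have bound : ∀ s ∈ Set.Ico T t, ‖φd s‖ ≤ ε / 4 * (Real.exp (s / τ) * (1 / τ)) := by
      intro s hs
      have hs0 : (0 : ℝ) ≤ s := le_trans hT0 hs.1
      have e1 := heq s hs0
      have hval : φd s = Real.exp (s / τ) * (h s - L) / τ := by
        simp only [hφd]
        field_simp
        linear_combination e1
      rw [hval]
      rw [Real.norm_eq_abs, abs_div, abs_mul, abs_of_pos (Real.exp_pos _),
        abs_of_pos hτ]
      rw [div_le_iff₀ hτ]
      have := hhb s hs.1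
      have hep := (Real.exp_pos (s / τ)).le
      calc Real.exp (s / τ) * |h s - L| ≤ Real.exp (s / τ) * (ε / 4) := by
            exact mul_le_mul_of_nonneg_left this hep
        _ = ε / 4 * (Real.exp (s / τ) * (1 / τ)) * τ := by field_simp
    have := image_norm_le_of_norm_deriv_right_le_deriv_boundary hcont hder hBa hBd bound
      (Set.right_mem_Icc.2 ht)
    simpa using this
  -- exp (-(t/τ)) * |φ T| → 0
  have hexp : Tendsto (fun t : ℝ => |φ T| * Real.exp (-(t / τ))) atTop (nhds 0) := by
    have h1 : Tendsto (fun t : ℝ => t / τ) atTop atTop :=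
      tendsto_id.atTop_div_const hτ
    have h2 := Real.tendsto_exp_neg_atTop_nhds_zero.comp h1
    simpa using h2.const_mul (|φ T|)
  obtain ⟨T₁, hT₁⟩ := Metric.tendsto_atTop.1 hexp (ε / 2) (by positivity)
  refine ⟨max T T₁, fun t ht => ?_⟩
  have htT : T ≤ t := le_trans (le_max_left _ _) ht
  have htT1 : T₁ ≤ t := le_trans (le_max_right _ _) ht
  have ht0 : (0 : ℝ) ≤ t := le_trans hT0 htT
  have hmain := main t htT
  have hwt : w t - L = φ t * Real.exp (-(t / τ)) := by
    simp only [hφ]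
    rw [mul_comm (Real.exp (t / τ)), mul_assoc, ← Real.exp_add]
    simp
  have hsmall : |φ T| * Real.exp (-(t / τ)) < ε / 2 := by
    have := hT₁ t htT1
    rw [Real.dist_eq, sub_zero] at this
    exact lt_of_le_of_lt (le_abs_self _) this
  have hep : 0 < Real.exp (-(t / τ)) := Real.exp_pos _
  rw [Real.dist_eq, hwt, abs_mul, abs_of_pos hep]
  have hBle : B t * Real.exp (-(t / τ)) ≤ |φ T| * Real.exp (-(t / τ)) + ε / 4 := by
    have hexp_pos : (0:ℝ) < Real.exp (T / τ) := Real.exp_pos _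
    have : B t ≤ |φ T| + ε / 4 * Real.exp (t / τ) := by
      simp only [hB]
      nlinarith
    calc B t * Real.exp (-(t / τ)) ≤ (|φ T| + ε / 4 * Real.exp (t / τ)) * Real.exp (-(t / τ)) :=
          mul_le_mul_of_nonneg_right this hep.le
      _ = |φ T| * Real.exp (-(t / τ)) + ε / 4 := by
          rw [add_mul, mul_assoc, ← Real.exp_add]; simp
  calc |φ t| * Real.exp (-(t / τ)) ≤ B t * Real.exp (-(t / τ)) :=
        mul_le_mul_of_nonneg_right hmain hep.le
    _ ≤ |φ T| * Real.exp (-(t / τ)) + ε / 4 := hBle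
    _ < ε / 2 + ε / 4 := by linarith
    _ < ε := by linarith


/-- if `u` solves the LCA dynamics on `[0,∞)` and the outputs
`T_λ(u(t))` converge to `a*` as `t → ∞`, then the states converge:
`u(t) → u* := a* + Φᵀ(y − Φa*)`. -/
theorem stmt4 {M N : ℕ} (hM : 0 < M) (hN : 0 < N)
    (Φ : Matrix (Fin M) (Fin N) ℝ) (y : Fin M → ℝ)
    (lam : ℝ) (hlam : 0 < lam) (τ : ℝ) (hτ : 0 < τ) (f : ℝ → ℝ)
    (hf_cont : ContinuousOn f {u : ℝ | lam ≤ |u|})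
    (hf_diff : ∀ u : ℝ, lam < |u| → DifferentiableAt ℝ f u)
    (hf_odd : ∀ u : ℝ, lam ≤ |u| → f (-u) = -f u)
    (hf_lam : f lam = 0)
    (hf_pos : ∀ u : ℝ, lam < |u| → 0 < deriv f u)
    (hf_le : ∀ u : ℝ, lam ≤ u → f u ≤ u)
    (u u' : ℝ → Fin N → ℝ)
    (hderiv : ∀ t : ℝ, 0 ≤ t → HasDerivWithinAt u (u' t) (Set.Ici 0) t)
    (hdyn : ∀ t : ℝ, 0 ≤ t →
      τ • u' t =
        -(u t) - (Φᵀ * Φ - 1) *ᵥ (fun n => Tl lam f (u t n)) + Φᵀ *ᵥ y)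
    (astar : Fin N → ℝ)
    (hconv : Filter.Tendsto (fun t => (fun n => Tl lam f (u t n)))
      Filter.atTop (nhds astar)) :
    Filter.Tendsto u Filter.atTop (nhds (astar + Φᵀ *ᵥ (y - Φ *ᵥ astar))) := by
  set a : ℝ → Fin N → ℝ := fun t n => Tl lam f (u t n) with ha
  set A : Matrix (Fin N) (Fin N) ℝ := Φᵀ * Φ - 1 with hA
  set b : Fin N → ℝ := Φᵀ *ᵥ y with hb
  have hid : astar + Φᵀ *ᵥ (y - Φ *ᵥ astar) = fun n => b n - (A *ᵥ astar) n := by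
    funext n
    simp only [hA, hb, Pi.add_apply, Matrix.mulVec_sub, Matrix.sub_mulVec,
      Matrix.mulVec_mulVec, Matrix.one_mulVec, Pi.sub_apply]
    ring
  rw [hid, tendsto_pi_nhds]
  intro n
  have hcomp : ∀ j, Filter.Tendsto (fun t => a t j) Filter.atTop (nhds (astar j)) :=
    fun j => (tendsto_pi_nhds.1 hconv) j
  have hAv : Filter.Tendsto (fun t => (A *ᵥ a t) n) Filter.atTop (nhds ((A *ᵥ astar) n)) := by
    simp only [Matrix.mulVec, dotProduct]
    exact tendsto_finset_sum _ (fun j _ => ((hcomp j).const_mul _))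
  have hh : Filter.Tendsto (fun t => b n - (A *ᵥ a t) n) Filter.atTop
      (nhds (b n - (A *ᵥ astar) n)) := tendsto_const_nhds.sub hAv
  apply scalar_ode hτ (fun t => u t n) (fun t => u' t n) (fun t => b n - (A *ᵥ a t) n) _
    (fun t ht => hasDerivWithinAt_pi.1 (hderiv t ht) n) _ hh
  intro t ht
  have := congrFun (hdyn t ht) n
  simp only [Pi.smul_apply, smul_eq_mul, Pi.add_apply, Pi.sub_apply, Pi.neg_apply, ← hA,
    ← hb, ← ha] at this
  have h2 : (A *ᵥ fun n => Tl lam f (u t n)) = A *ᵥ a t := rfl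
  rw [h2] at this
  show τ * u' t n = -(u t n) + (b n - (A *ᵥ a t) n)
  linarith
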